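/- Let T_1, T_2, ..., T_n be bounded linear operators on a complex Hilbert space H, and let x ∈ H be a unit vector. Then ‖(∑_{k=1}^n T_k) x‖² ≤ ⟨ ( ∑_{k=1}^n T_k* T_k + (1/4) ∑_{1 ≤ k ≠ j ≤ n} (T_k + T_j)*(T_k + T_j) ) x, x ⟩. -/

import Mathlib

open ContinuousLinearMap

theorem norm_sq_sum_apply_le_inner
    {H : Type*} [NormedAddCommGroup H] [InnerProductSpace ℂ H] [CompleteSpace H]
    (n : ℕ) (T : Fin n → H →L[ℂ] H) (x : H) (hx : ‖x‖ = 1) :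
    ‖(∑ k, T k) x‖ ^ 2 ≤
      ((inner ℂ
        (((∑ k, adjoint (T k) ∘L T k) +
          (4 : ℂ)⁻¹ • ∑ k, ∑ j ∈ Finset.univ.erase k,
            adjoint (T k + T j) ∘L (T k + T j)) x) x : ℂ)).re := by
  set y : Fin n → H := fun k => T k x with hy
  set r : Fin n → Fin n → ℝ := fun k j => (inner ℂ (y k) (y j) : ℂ).re with hr
  have hdiag : ∀ k, r k k = ‖y k‖ ^ 2 := by
    intro k
    have := inner_self_eq_norm_sq (𝕜 := ℂ) (y k)
    simpa [hr] using this
  have hsymm : ∀ k j, (inner ℂ (y j) (y k) : ℂ).re = r k j := by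
    intro k j
    have := inner_re_symm (𝕜 := ℂ) (y j) (y k)
    simpa [hr] using this
  have key : ∀ k j, 2 * r k j ≤ r k k + r j j := by
    intro k j
    have h0 : (0:ℝ) ≤ ‖y k - y j‖ ^ 2 := sq_nonneg _
    have h1 := norm_sub_sq (𝕜 := ℂ) (y k) (y j)
    simp only [RCLike.re_to_complex] at h1
    rw [hdiag k, hdiag j]
    rw [h1] at h0
    simp only [hr]
    linarith
  have hpair : ∀ k j, (inner ℂ (y k + y j) (y k + y j) : ℂ).re
      = r k k + 2 * r k j + r j j := by
    intro k j
    rw [inner_add_add_self]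
    simp only [Complex.add_re]
    have := hsymm k j
    simp only [hr] at this ⊢
    linarith
  have hc : (starRingEnd ℂ) (4:ℂ)⁻¹ = (4:ℂ)⁻¹ := by simp [Complex.ext_iff]
  have e1 : ((inner ℂ
        ((((∑ k, adjoint (T k) ∘L T k) +
          (4 : ℂ)⁻¹ • ∑ k, ∑ j ∈ Finset.univ.erase k,
            adjoint (T k + T j) ∘L (T k + T j)) : H →L[ℂ] H) x) x : ℂ))
      = (∑ k, (inner ℂ (y k) (y k) : ℂ)) +
        (4:ℂ)⁻¹ * ∑ k, ∑ j ∈ Finset.univ.erase k,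
          (inner ℂ (y k + y j) (y k + y j) : ℂ) := by
    simp only [ContinuousLinearMap.add_apply, ContinuousLinearMap.smul_apply,
      ContinuousLinearMap.sum_apply, ContinuousLinearMap.comp_apply,
      inner_add_left, inner_smul_left, sum_inner, adjoint_inner_left, hc, hy]
  have hRHS : ((inner ℂ
        ((((∑ k, adjoint (T k) ∘L T k) +
          (4 : ℂ)⁻¹ • ∑ k, ∑ j ∈ Finset.univ.erase k,
            adjoint (T k + T j) ∘L (T k + T j)) : H →L[ℂ] H) x) x : ℂ)).re
      = (∑ k, r k k) + (4:ℝ)⁻¹ * ∑ k, ∑ j ∈ Finset.univ.erase k,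
          (r k k + 2 * r k j + r j j) := by
    rw [e1, Complex.add_re, Complex.mul_re]
    have him : ((4:ℂ)⁻¹).im = 0 := by norm_num
    have hre : ((4:ℂ)⁻¹).re = (4:ℝ)⁻¹ := by norm_num
    rw [him, hre]
    simp only [Complex.re_sum, zero_mul, sub_zero]
    congr 1
    congr 1
    apply Finset.sum_congr rfl
    intro k _
    apply Finset.sum_congr rfl
    intro j _
    exact hpair k j
  rw [hRHS]
  have hLHS : ‖(∑ k, T k) x‖ ^ 2 = ∑ k, ∑ j, r k j := by
    have := inner_self_eq_norm_sq (𝕜 := ℂ) ((∑ k, T k) x)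
    rw [← this]
    simp only [ContinuousLinearMap.sum_apply, sum_inner, inner_sum,
      RCLike.re_to_complex, Complex.re_sum]
    rw [Finset.sum_comm]
  rw [hLHS]
  have hsplit : ∀ k : Fin n, ∑ j, r k j = r k k + ∑ j ∈ Finset.univ.erase k, r k j := by
    intro k
    rw [← Finset.add_sum_erase _ _ (Finset.mem_univ k)]
  have hbound : ∑ k, ∑ j ∈ Finset.univ.erase k, (4 * r k j)
      ≤ ∑ k, ∑ j ∈ Finset.univ.erase k, (r k k + 2 * r k j + r j j) := by
    apply Finset.sum_le_sum; intro k _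
    apply Finset.sum_le_sum; intro j _
    linarith [key k j]
  have h4 : ∑ k, ∑ j ∈ Finset.univ.erase k, (4 * r k j)
      = 4 * ∑ k, ∑ j ∈ Finset.univ.erase k, r k j := by
    rw [Finset.mul_sum]
    exact Finset.sum_congr rfl fun k _ => by rw [Finset.mul_sum]
  rw [Finset.sum_congr rfl (fun k _ => hsplit k), Finset.sum_add_distrib]
  rw [h4] at hbound
  linarith
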